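/- Let (𝔪ˡ_t, 𝔪ʳ_t, Φ_t) be a one-parameter formal deformation of an oriented dialgebra D over (G, ε), with infinitesimal (m₁ = (mˡ₁, mʳ₁), θ₁) where θ₁(g,x) = −φ₁(g, g⁻¹x). Then for ε(g) = +1: g mˡ₁(y₁,y₂) − θ₁(g, g y₁ ⊣ g y₂) = mˡ₁(g y₁, g y₂) − θ₁(g, g y₁) ⊣ g y₂ − g y₁ ⊣ θ₁(g, g y₂), and for ε(g) = −1: g mˡ₁(y₁,y₂) − θ₁(g, g y₂ ⊣ g y₁) = mˡ₁(g y₂, g y₁) − θ₁(g, g y₂) ⊣ g y₁ − g y₂ ⊣ θ₁(g, g y₁); analogous identities hold for mʳ₁ and ⊢. Together with the cocycle condition on θ₁ and the dialgebra 2-cocycle condition on (mˡ₁, mʳ₁) arising from associativity of the deformed products at order t, this says the infinitesimal is a 1-cocycle in the oriented dialgebra cohomology H̃¹_G(D,D). -/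

import Mathlib

/-- A dialgebra over `K`: two bilinear associative products `⊣` (`l`) and `⊢` (`r`)
satisfying the three dialgebra axioms. -/
structure Dialgebra (K D : Type*) [Field K] [AddCommGroup D] [Module K D] where
  l : D →ₗ[K] D →ₗ[K] D
  r : D →ₗ[K] D →ₗ[K] D
  l_assoc : ∀ x y z : D, l (l x y) z = l x (l y z)
  r_assoc : ∀ x y z : D, r (r x y) z = r x (r y z)
  ax1 : ∀ x y z : D, l (l x y) z = l x (r y z)
  ax2 : ∀ x y z : D, l (r x y) z = r x (l y z)
  ax3 : ∀ x y z : D, r (l x y) z = r (r x y) z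

/-- An oriented dialgebra over an oriented group `(G, ε)`: a dialgebra with a linear
`G`-action `ρ` such that `g(x ⊣ y) = gx ⊣ gy`, `g(x ⊢ y) = gx ⊢ gy` if `ε g = +1`,
and `g(x ⊣ y) = gy ⊣ gx`, `g(x ⊢ y) = gy ⊢ gx` if `ε g = -1`. -/
structure OrientedDialgebra (K D G : Type*) [Field K] [AddCommGroup D] [Module K D]
    [Group G] (ε : G →* ℤˣ) extends Dialgebra K D where
  ρ : G →* Module.End K D
  orient_l : ∀ (g : G) (x y : D),
    ρ g (l x y) = if ε g = 1 then l (ρ g x) (ρ g y) else l (ρ g y) (ρ g x)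
  orient_r : ∀ (g : G) (x y : D),
    ρ g (r x y) = if ε g = 1 then r (ρ g x) (ρ g y) else r (ρ g y) (ρ g x)


/-- A one-parameter formal deformation `(𝔪ˡ_t, 𝔪ʳ_t, Φ_t)` of an oriented dialgebra `D`
over `(G, ε)`, encoded by the coefficients `mˡᵢ, mʳᵢ ∈ Hom(D ⊗ D, D)` and
`φᵢ ∈ Maps(G, Hom(D, D))` of the formal power series, with all deformation axioms
written coefficientwise. -/
structure Deformation (K D G : Type*) [Field K] [AddCommGroup D] [Module K D] [Group G]
    (ε : G →* ℤˣ) (OD : OrientedDialgebra K D G ε) where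
  ml : ℕ → D →ₗ[K] D →ₗ[K] D
  mr : ℕ → D →ₗ[K] D →ₗ[K] D
  φ : ℕ → G → Module.End K D
  ml_zero : ml 0 = OD.l
  mr_zero : mr 0 = OD.r
  φ_zero : ∀ g : G, φ 0 g = OD.ρ g
  -- `(D[[t]], 𝔪ˡ_t, 𝔪ʳ_t)` is a dialgebra:
  ml_assoc : ∀ (n : ℕ) (x₁ x₂ x₃ : D),
    ∑ p ∈ Finset.HasAntidiagonal.antidiagonal n, ml p.1 (ml p.2 x₁ x₂) x₃
      = ∑ p ∈ Finset.HasAntidiagonal.antidiagonal n, ml p.1 x₁ (ml p.2 x₂ x₃)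
  mr_assoc : ∀ (n : ℕ) (x₁ x₂ x₃ : D),
    ∑ p ∈ Finset.HasAntidiagonal.antidiagonal n, mr p.1 (mr p.2 x₁ x₂) x₃
      = ∑ p ∈ Finset.HasAntidiagonal.antidiagonal n, mr p.1 x₁ (mr p.2 x₂ x₃)
  ax1 : ∀ (n : ℕ) (x₁ x₂ x₃ : D),
    ∑ p ∈ Finset.HasAntidiagonal.antidiagonal n, ml p.1 (ml p.2 x₁ x₂) x₃
      = ∑ p ∈ Finset.HasAntidiagonal.antidiagonal n, ml p.1 x₁ (mr p.2 x₂ x₃)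
  ax2 : ∀ (n : ℕ) (x₁ x₂ x₃ : D),
    ∑ p ∈ Finset.HasAntidiagonal.antidiagonal n, ml p.1 (mr p.2 x₁ x₂) x₃
      = ∑ p ∈ Finset.HasAntidiagonal.antidiagonal n, mr p.1 x₁ (ml p.2 x₂ x₃)
  ax3 : ∀ (n : ℕ) (x₁ x₂ x₃ : D),
    ∑ p ∈ Finset.HasAntidiagonal.antidiagonal n, mr p.1 (ml p.2 x₁ x₂) x₃
      = ∑ p ∈ Finset.HasAntidiagonal.antidiagonal n, mr p.1 (mr p.2 x₁ x₂) x₃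
  -- `Φ_t(g₁g₂, x) = Φ_t(g₁, Φ_t(g₂, x))`:
  φ_mul : ∀ (n : ℕ) (g₁ g₂ : G) (x : D),
    φ n (g₁ * g₂) x = ∑ p ∈ Finset.HasAntidiagonal.antidiagonal n, φ p.1 g₁ (φ p.2 g₂ x)
  -- `Φ_t(g, 𝔪ˡ_t(y₁, y₂))` equals `𝔪ˡ_t(Φ_t(g,y₁), Φ_t(g,y₂))` or
  -- `𝔪ˡ_t(Φ_t(g,y₂), Φ_t(g,y₁))` according to `ε g = ±1`, and similarly for `𝔪ʳ_t`:
  orient_l : ∀ (n : ℕ) (g : G) (y₁ y₂ : D),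
    ∑ p ∈ Finset.HasAntidiagonal.antidiagonal n, φ p.1 g (ml p.2 y₁ y₂)
      = if ε g = 1 then
          ∑ p ∈ Finset.HasAntidiagonal.antidiagonal n, ∑ q ∈ Finset.HasAntidiagonal.antidiagonal p.2, ml p.1 (φ q.1 g y₁) (φ q.2 g y₂)
        else
          ∑ p ∈ Finset.HasAntidiagonal.antidiagonal n, ∑ q ∈ Finset.HasAntidiagonal.antidiagonal p.2, ml p.1 (φ q.1 g y₂) (φ q.2 g y₁)
  orient_r : ∀ (n : ℕ) (g : G) (y₁ y₂ : D),
    ∑ p ∈ Finset.HasAntidiagonal.antidiagonal n, φ p.1 g (mr p.2 y₁ y₂)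
      = if ε g = 1 then
          ∑ p ∈ Finset.HasAntidiagonal.antidiagonal n, ∑ q ∈ Finset.HasAntidiagonal.antidiagonal p.2, mr p.1 (φ q.1 g y₁) (φ q.2 g y₂)
        else
          ∑ p ∈ Finset.HasAntidiagonal.antidiagonal n, ∑ q ∈ Finset.HasAntidiagonal.antidiagonal p.2, mr p.1 (φ q.1 g y₂) (φ q.2 g y₁)

private lemma aux_cocycle {A : Type*} [AddCommGroup A] {a b c d : A}
    (h : d + b = a + c) : a - b + c - d = 0 := by
  rw [show a - b + c - d = a + c - (d + b) from by abel, h, sub_self]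

/-- the infinitesimal `(m₁ = (mˡ₁, mʳ₁), θ₁)` of a one-parameter formal
deformation of an oriented dialgebra, where `θ₁(g, x) = −φ₁(g, g⁻¹x)`, is a 1-cocycle in
the oriented dialgebra cohomology `H̃¹_G(D, D)`: `θ₁` satisfies the crossed-homomorphism
cocycle condition, `(mˡ₁, mʳ₁)` is a dialgebra 2-cocycle, and the `ε`-twisted
compatibility identities between `θ₁` and `(mˡ₁, mʳ₁)` hold. -/
theorem infinitesimal_is_one_cocycle
    (K D G : Type*) [Field K] [AddCommGroup D] [Module K D] [Group G] [CharZero K]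
    (ε : G →* ℤˣ) (OD : OrientedDialgebra K D G ε)
    (Df : Deformation K D G ε OD)
    (θ₁ : G → D → D)
    (hθ : ∀ (g : G) (x : D), θ₁ g x = -(Df.φ 1 g (OD.ρ g⁻¹ x))) :
    -- the crossed-homomorphism cocycle condition on `θ₁`:
    (∀ (g₁ g₂ : G) (x : D),
      θ₁ (g₁ * g₂) (OD.ρ g₁ (OD.ρ g₂ x))
        = OD.ρ g₁ (θ₁ g₂ (OD.ρ g₂ x)) + θ₁ g₁ (OD.ρ g₁ (OD.ρ g₂ x))) ∧
    -- `(mˡ₁, mʳ₁)` is a dialgebra 2-cocycle (the five 3-tree identities):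
    (∀ x₁ x₂ x₃ : D,
      OD.r x₁ (Df.mr 1 x₂ x₃) - Df.mr 1 (OD.r x₁ x₂) x₃ + Df.mr 1 x₁ (OD.r x₂ x₃)
        - OD.r (Df.mr 1 x₁ x₂) x₃ = 0) ∧
    (∀ x₁ x₂ x₃ : D,
      OD.r x₁ (Df.mr 1 x₂ x₃) - Df.mr 1 (OD.l x₁ x₂) x₃ + Df.mr 1 x₁ (OD.r x₂ x₃)
        - OD.r (Df.ml 1 x₁ x₂) x₃ = 0) ∧
    (∀ x₁ x₂ x₃ : D,
      OD.r x₁ (Df.ml 1 x₂ x₃) - Df.ml 1 (OD.r x₁ x₂) x₃ + Df.mr 1 x₁ (OD.l x₂ x₃)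
        - OD.l (Df.mr 1 x₁ x₂) x₃ = 0) ∧
    (∀ x₁ x₂ x₃ : D,
      OD.l x₁ (Df.mr 1 x₂ x₃) - Df.ml 1 (OD.l x₁ x₂) x₃ + Df.ml 1 x₁ (OD.r x₂ x₃)
        - OD.l (Df.ml 1 x₁ x₂) x₃ = 0) ∧
    (∀ x₁ x₂ x₃ : D,
      OD.l x₁ (Df.ml 1 x₂ x₃) - Df.ml 1 (OD.l x₁ x₂) x₃ + Df.ml 1 x₁ (OD.l x₂ x₃)
        - OD.l (Df.ml 1 x₁ x₂) x₃ = 0) ∧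
    -- the compatibility identities for `⊣` and `mˡ₁`:
    (∀ (g : G) (y₁ y₂ : D), ε g = 1 →
      OD.ρ g (Df.ml 1 y₁ y₂) - θ₁ g (OD.l (OD.ρ g y₁) (OD.ρ g y₂))
        = Df.ml 1 (OD.ρ g y₁) (OD.ρ g y₂) - OD.l (θ₁ g (OD.ρ g y₁)) (OD.ρ g y₂)
          - OD.l (OD.ρ g y₁) (θ₁ g (OD.ρ g y₂))) ∧
    (∀ (g : G) (y₁ y₂ : D), ε g = -1 →
      OD.ρ g (Df.ml 1 y₁ y₂) - θ₁ g (OD.l (OD.ρ g y₂) (OD.ρ g y₁))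
        = Df.ml 1 (OD.ρ g y₂) (OD.ρ g y₁) - OD.l (θ₁ g (OD.ρ g y₂)) (OD.ρ g y₁)
          - OD.l (OD.ρ g y₂) (θ₁ g (OD.ρ g y₁))) ∧
    -- the compatibility identities for `⊢` and `mʳ₁`:
    (∀ (g : G) (y₁ y₂ : D), ε g = 1 →
      OD.ρ g (Df.mr 1 y₁ y₂) - θ₁ g (OD.r (OD.ρ g y₁) (OD.ρ g y₂))
        = Df.mr 1 (OD.ρ g y₁) (OD.ρ g y₂) - OD.r (θ₁ g (OD.ρ g y₁)) (OD.ρ g y₂)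
          - OD.r (OD.ρ g y₁) (θ₁ g (OD.ρ g y₂))) ∧
    (∀ (g : G) (y₁ y₂ : D), ε g = -1 →
      OD.ρ g (Df.mr 1 y₁ y₂) - θ₁ g (OD.r (OD.ρ g y₂) (OD.ρ g y₁))
        = Df.mr 1 (OD.ρ g y₂) (OD.ρ g y₁) - OD.r (θ₁ g (OD.ρ g y₂)) (OD.ρ g y₁)
          - OD.r (OD.ρ g y₂) (θ₁ g (OD.ρ g y₁))) := by

  have had1 : (Finset.HasAntidiagonal.antidiagonal 1 : Finset (ℕ × ℕ)) = {(0,1),(1,0)} := by decide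
  have had0 : (Finset.HasAntidiagonal.antidiagonal 0 : Finset (ℕ × ℕ)) = {(0,0)} := by decide
  have hsum1 : ∀ (f : ℕ × ℕ → D), ∑ p ∈ Finset.HasAntidiagonal.antidiagonal 1, f p = f (0,1) + f (1,0) := by
    intro f; rw [had1]; simp
  have hinv : ∀ (g : G) (x : D), OD.ρ g⁻¹ (OD.ρ g x) = x := by
    intro g x
    rw [← Module.End.mul_apply, ← map_mul, inv_mul_cancel, map_one, Module.End.one_apply]
  have hεinv : ∀ g : G, ε g⁻¹ = ε g := by
    intro g
    rw [map_inv]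
    rcases Int.units_eq_one_or (ε g) with h | h <;> rw [h] <;> rfl
  refine ⟨?_, ?_, ?_, ?_, ?_, ?_, ?_, ?_, ?_, ?_⟩
  · -- crossed-homomorphism cocycle
    intro g₁ g₂ x
    have h := Df.φ_mul 1 g₁ g₂ x
    rw [hsum1] at h
    simp only [Df.φ_zero] at h
    have e : (g₁ * g₂)⁻¹ * g₁ * g₂ = 1 := by group
    have hx : OD.ρ (g₁ * g₂)⁻¹ (OD.ρ g₁ (OD.ρ g₂ x)) = x := by
      rw [← Module.End.mul_apply, ← Module.End.mul_apply, ← map_mul, ← map_mul, e,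
        map_one, Module.End.one_apply]
    rw [hθ, hθ, hθ, hx, hinv, hinv, map_neg, h]
    abel
  · intro x₁ x₂ x₃
    have h := Df.mr_assoc 1 x₁ x₂ x₃
    rw [hsum1, hsum1] at h
    simp only [Df.mr_zero] at h
    exact aux_cocycle h
  · intro x₁ x₂ x₃
    have h := (Df.ax3 1 x₁ x₂ x₃).trans (Df.mr_assoc 1 x₁ x₂ x₃)
    rw [hsum1, hsum1] at h
    simp only [Df.mr_zero, Df.ml_zero] at h
    exact aux_cocycle h
  · intro x₁ x₂ x₃
    have h := Df.ax2 1 x₁ x₂ x₃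
    rw [hsum1, hsum1] at h
    simp only [Df.mr_zero, Df.ml_zero] at h
    exact aux_cocycle h
  · intro x₁ x₂ x₃
    have h := Df.ax1 1 x₁ x₂ x₃
    rw [hsum1, hsum1] at h
    simp only [Df.mr_zero, Df.ml_zero] at h
    exact aux_cocycle h
  · intro x₁ x₂ x₃
    have h := Df.ml_assoc 1 x₁ x₂ x₃
    rw [hsum1, hsum1] at h
    simp only [Df.ml_zero] at h
    exact aux_cocycle h
  · -- compat l, ε = 1
    intro g y₁ y₂ hg
    have h := Df.orient_l 1 g y₁ y₂
    rw [if_pos hg, hsum1, hsum1] at h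
    simp only [had0, had1, Finset.sum_pair (show ((0:ℕ),(1:ℕ)) ≠ (1,0) from by decide),
      Finset.sum_singleton, Df.ml_zero, Df.φ_zero] at h
    have hθ1 : ∀ z : D, θ₁ g (OD.ρ g z) = -(Df.φ 1 g z) := by
      intro z; rw [hθ, hinv]
    have hθl : θ₁ g (OD.l (OD.ρ g y₁) (OD.ρ g y₂)) = -(Df.φ 1 g (OD.l y₁ y₂)) := by
      rw [hθ, OD.orient_l, hεinv, if_pos hg, hinv, hinv]
    rw [hθl, hθ1, hθ1]
    simp only [map_neg, LinearMap.neg_apply, sub_neg_eq_add]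
    rw [h]; abel
  · -- compat l, ε = -1
    intro g y₁ y₂ hg
    have hg' : ¬ ε g = 1 := by rw [hg]; decide
    have h := Df.orient_l 1 g y₁ y₂
    rw [if_neg hg', hsum1, hsum1] at h
    simp only [had0, had1, Finset.sum_pair (show ((0:ℕ),(1:ℕ)) ≠ (1,0) from by decide),
      Finset.sum_singleton, Df.ml_zero, Df.φ_zero] at h
    have hθ1 : ∀ z : D, θ₁ g (OD.ρ g z) = -(Df.φ 1 g z) := by
      intro z; rw [hθ, hinv]
    have hθl : θ₁ g (OD.l (OD.ρ g y₂) (OD.ρ g y₁)) = -(Df.φ 1 g (OD.l y₁ y₂)) := by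
      rw [hθ, OD.orient_l, hεinv, if_neg hg', hinv, hinv]
    rw [hθl, hθ1, hθ1]
    simp only [map_neg, LinearMap.neg_apply, sub_neg_eq_add]
    rw [h]; abel
  · -- compat r, ε = 1
    intro g y₁ y₂ hg
    have h := Df.orient_r 1 g y₁ y₂
    rw [if_pos hg, hsum1, hsum1] at h
    simp only [had0, had1, Finset.sum_pair (show ((0:ℕ),(1:ℕ)) ≠ (1,0) from by decide),
      Finset.sum_singleton, Df.mr_zero, Df.φ_zero] at h
    have hθ1 : ∀ z : D, θ₁ g (OD.ρ g z) = -(Df.φ 1 g z) := by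
      intro z; rw [hθ, hinv]
    have hθl : θ₁ g (OD.r (OD.ρ g y₁) (OD.ρ g y₂)) = -(Df.φ 1 g (OD.r y₁ y₂)) := by
      rw [hθ, OD.orient_r, hεinv, if_pos hg, hinv, hinv]
    rw [hθl, hθ1, hθ1]
    simp only [map_neg, LinearMap.neg_apply, sub_neg_eq_add]
    rw [h]; abel
  · -- compat r, ε = -1
    intro g y₁ y₂ hg
    have hg' : ¬ ε g = 1 := by rw [hg]; decide
    have h := Df.orient_r 1 g y₁ y₂
    rw [if_neg hg', hsum1, hsum1] at h
    simp only [had0, had1, Finset.sum_pair (show ((0:ℕ),(1:ℕ)) ≠ (1,0) from by decide),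
      Finset.sum_singleton, Df.mr_zero, Df.φ_zero] at h
    have hθ1 : ∀ z : D, θ₁ g (OD.ρ g z) = -(Df.φ 1 g z) := by
      intro z; rw [hθ, hinv]
    have hθl : θ₁ g (OD.r (OD.ρ g y₂) (OD.ρ g y₁)) = -(Df.φ 1 g (OD.r y₁ y₂)) := by
      rw [hθ, OD.orient_r, hεinv, if_neg hg', hinv, hinv]
    rw [hθl, hθ1, hθ1]
    simp only [map_neg, LinearMap.neg_apply, sub_neg_eq_add]
    rw [h]; abel
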